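/- (Burns–Hale) If every nontrivial finitely-generated subgroup H of a group G admits a surjective homomorphism onto some nontrivial left-orderable group, then G is left-orderable. -/

import Mathlib

theorem burns_hale_fin {G : Type u} [Group G]
    (h : ∀ H : Subgroup G, H.FG → H ≠ ⊥ →
      ∃ (L : Type u) (_ : Group L), Nontrivial L ∧
        (∃ r : L → L → Prop, IsStrictTotalOrder L r ∧
          ∀ a b c : L, r a b ↔ r (c * a) (c * b)) ∧
        ∃ f : H →* L, Function.Surjective f) :
    ∀ n (F : Finset G), F.card ≤ n → (1:G) ∉ F →
      ∃ C : Set G, (∀ c ∈ C, c ∈ F ∨ c⁻¹ ∈ F) ∧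
        (∀ g ∈ F, g ∈ C ∨ g⁻¹ ∈ C) ∧
        (1:G) ∉ Subsemigroup.closure C := by
  intro n
  induction n with
  | zero =>
    intro F hcard _
    refine ⟨∅, by simp, ?_, by simp [Subsemigroup.closure_empty, Subsemigroup.notMem_bot]⟩
    have : F = ∅ := Finset.card_eq_zero.mp (Nat.le_zero.mp hcard)
    simp [this]
  | succ n ih =>
    intro F hcard h1F
    rcases F.eq_empty_or_nonempty with rfl | ⟨g0, hg0⟩
    · exact ih ∅ (Nat.zero_le _) (by simp)
    -- the subgroup generated by F
    set H : Subgroup G := Subgroup.closure (F : Set G) with hH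
    have hFG : H.FG := Subgroup.fg_iff H |>.mpr ⟨F, rfl, F.finite_toSet⟩
    have hne : H ≠ ⊥ := by
      intro hb
      have : g0 ∈ H := Subgroup.subset_closure hg0
      rw [hb, Subgroup.mem_bot] at this
      exact h1F (this ▸ hg0)
    obtain ⟨L, _, hLnt, ⟨r, hord, hinv⟩, f, hf⟩ := h H hFG hne
    haveI := hord
    have hFH : ∀ g ∈ F, g ∈ H := fun g hg => Subgroup.subset_closure hg
    -- split F
    classical
    set F₁ : Finset G := F.filter (fun g => ∀ hg : g ∈ H, f ⟨g, hg⟩ = 1) with hF₁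
    have hF₁sub : F₁ ⊆ F := Finset.filter_subset _ _
    -- F₁ ≠ F : otherwise f is trivial
    have hFne : F₁ ≠ F := by
      intro heq
      obtain ⟨y, hy⟩ := exists_ne (1 : L)
      obtain ⟨x, hx⟩ := hf y
      have : ∀ (g : G) (hg : g ∈ Subgroup.closure (F : Set G)), f ⟨g, hg⟩ = 1 := by
        intro g hg
        induction hg using Subgroup.closure_induction with
        | mem x hx =>
          have : x ∈ F₁ := heq ▸ hx
          exact (Finset.mem_filter.mp this).2 _
        | one => exact map_one f
        | mul x y hx hy px py =>
          have : (⟨x * y, mul_mem hx hy⟩ : H) = ⟨x, hx⟩ * ⟨y, hy⟩ := rfl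
          rw [this, map_mul, px, py, mul_one]
        | inv x hx px =>
          have : (⟨x⁻¹, inv_mem hx⟩ : H) = (⟨x, hx⟩)⁻¹ := rfl
          rw [this, map_inv, px, inv_one]
      have : f x = 1 := by
        have := this x.1 x.2
        simpa using this
      exact hy (hx ▸ this)
    have hcard₁ : F₁.card ≤ n := by
      have := Finset.card_lt_card (Finset.ssubset_iff_subset_ne.mpr ⟨hF₁sub, hFne⟩)
      omega
    obtain ⟨C₁, hC₁F, hC₁tot, hC₁one⟩ := ih F₁ hcard₁ (fun hm => h1F (hF₁sub hm))
    -- positives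
    have hpos_mul : ∀ a b : L, r 1 a → r 1 b → r 1 (a * b) := by
      intro a b ha hb
      have : r a (a * b) := by
        have := (hinv 1 b a).mp hb
        simpa using this
      exact _root_.trans ha this
    -- choice of sign for g ∉ F₁
    have hsign : ∀ g ∈ F, g ∉ F₁ → ∃ c : G, (c = g ∨ c = g⁻¹) ∧
        ∃ hc : c ∈ H, r 1 (f ⟨c, hc⟩) := by
      intro g hgF hgF₁
      have hgH := hFH g hgF
      have hfg : f ⟨g, hgH⟩ ≠ 1 := by
        intro he
        exact hgF₁ (Finset.mem_filter.mpr ⟨hgF, fun _ => he⟩)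
      rcases trichotomous_of r 1 (f ⟨g, hgH⟩) with hp | he | hn
      · exact ⟨g, Or.inl rfl, hgH, hp⟩
      · exact absurd he.symm hfg
      · refine ⟨g⁻¹, Or.inr rfl, inv_mem hgH, ?_⟩
        have : (⟨g⁻¹, inv_mem hgH⟩ : H) = (⟨g, hgH⟩)⁻¹ := rfl
        rw [this, map_inv]
        have := (hinv (f ⟨g, hgH⟩) 1 (f ⟨g, hgH⟩)⁻¹).mp hn
        simpa using this
    -- assemble C
    choose! c hc1 hc2 using hsign
    set C₂ : Set G := {x | ∃ g ∈ F, g ∉ F₁ ∧ x = c g} with hC₂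
    refine ⟨C₁ ∪ C₂, ?_, ?_, ?_⟩
    · rintro x (hx | ⟨g, hg, hg1, rfl⟩)
      · rcases hC₁F x hx with h' | h'
        · exact Or.inl (hF₁sub h')
        · exact Or.inr (hF₁sub h')
      · rcases hc1 g hg hg1 with he | he
        · rw [he]; exact Or.inl hg
        · rw [he]; exact Or.inr (by simpa using hg)
    · intro g hg
      by_cases hg1 : g ∈ F₁
      · rcases hC₁tot g hg1 with h' | h'
        · exact Or.inl (Or.inl h')
        · exact Or.inr (Or.inl h')
      · rcases hc1 g hg hg1 with he | he
        · exact Or.inl (Or.inr ⟨g, hg, hg1, he.symm⟩)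
        · exact Or.inr (Or.inr ⟨g, hg, hg1, he.symm⟩)
    · -- 1 not in closure
      set S : Subsemigroup G :=
        { carrier := {x | ∃ hx : x ∈ H,
            (f ⟨x, hx⟩ = 1 ∧ x ∈ Subsemigroup.closure C₁) ∨ r 1 (f ⟨x, hx⟩)},
          mul_mem' := by
            rintro x y ⟨hx, px⟩ ⟨hy, py⟩
            refine ⟨mul_mem hx hy, ?_⟩
            have hxy : (⟨x * y, mul_mem hx hy⟩ : H) = ⟨x, hx⟩ * ⟨y, hy⟩ := rfl
            rcases px with ⟨px1, px2⟩ | px <;> rcases py with ⟨py1, py2⟩ | py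
            · exact Or.inl ⟨by rw [hxy, map_mul, px1, py1, mul_one],
                mul_mem px2 py2⟩
            · exact Or.inr (by rw [hxy, map_mul, px1, one_mul]; exact py)
            · exact Or.inr (by rw [hxy, map_mul, py1, mul_one]; exact px)
            · exact Or.inr (by rw [hxy, map_mul]; exact hpos_mul _ _ px py) }
      have hCS : Subsemigroup.closure (C₁ ∪ C₂) ≤ S := by
        rw [Subsemigroup.closure_le]
        rintro x (hx | ⟨g, hg, hg1, rfl⟩)
        · rcases hC₁F x hx with h' | h'
          · have hxH := hFH x (hF₁sub h')
            refine ⟨hxH, Or.inl ⟨(Finset.mem_filter.mp h').2 _, Subsemigroup.subset_closure hx⟩⟩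
          · have hxH : x ∈ H := by
              have := hFH _ (hF₁sub h')
              simpa using inv_mem this
            refine ⟨hxH, Or.inl ⟨?_, Subsemigroup.subset_closure hx⟩⟩
            have hxi : f ⟨x⁻¹, inv_mem hxH⟩ = 1 := (Finset.mem_filter.mp h').2 _
            have : (⟨x⁻¹, inv_mem hxH⟩ : H) = (⟨x, hxH⟩)⁻¹ := rfl
            rw [this, map_inv, inv_eq_one] at hxi
            exact hxi
        · obtain ⟨hcH, hcr⟩ := hc2 g hg hg1
          exact ⟨hcH, Or.inr hcr⟩
      intro h1
      obtain ⟨h1H, p1⟩ := hCS h1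
      rcases p1 with ⟨_, p2⟩ | p
      · exact hC₁one p2
      · have : (⟨(1:G), h1H⟩ : H) = 1 := rfl
        rw [this, map_one] at p
        exact irrefl_of r 1 p

/-- (Burns–Hale) If every nontrivial finitely-generated subgroup of `G` surjects
onto some nontrivial left-orderable group, then `G` is left-orderable. -/
theorem stmt5 {G : Type u} [Group G]
    (h : ∀ H : Subgroup G, H.FG → H ≠ ⊥ →
      ∃ (L : Type u) (_ : Group L), Nontrivial L ∧
        (∃ r : L → L → Prop, IsStrictTotalOrder L r ∧
          ∀ a b c : L, r a b ↔ r (c * a) (c * b)) ∧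
        ∃ f : H →* L, Function.Surjective f) :
    ∃ r : G → G → Prop, IsStrictTotalOrder G r ∧
      ∀ a b c : G, r a b ↔ r (c * a) (c * b) := by
  classical
  have key : ∀ F : Finset G, ∃ C : Set G,
      (∀ g ∈ F.erase 1, g ∈ C ∨ g⁻¹ ∈ C) ∧ (1:G) ∉ Subsemigroup.closure C := by
    intro F
    obtain ⟨C, _, hC2, hC3⟩ :=
      burns_hale_fin h (F.erase 1).card (F.erase 1) le_rfl (Finset.notMem_erase 1 F)
    exact ⟨C, hC2, hC3⟩
  choose C hCtot hCone using key
  haveI : Filter.NeBot (Filter.atTop : Filter (Finset G)) := Filter.atTop_neBot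
  set U : Ultrafilter (Finset G) := Ultrafilter.of Filter.atTop with hU
  have hUle : (U : Filter (Finset G)) ≤ Filter.atTop := Ultrafilter.of_le _
  set P : Set G := {g | {F : Finset G | g ∈ Subsemigroup.closure (C F)} ∈ U} with hP
  -- multiplicative
  have hPmul : ∀ a b : G, a ∈ P → b ∈ P → a * b ∈ P := by
    intro a b ha hb
    refine Filter.mem_of_superset (Filter.inter_mem ha hb) ?_
    rintro F ⟨h1, h2⟩
    simp only [Set.mem_setOf_eq] at h1 h2 ⊢
    exact mul_mem h1 h2
  have hPone : (1:G) ∉ P := by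
    intro h1
    obtain ⟨F, hF⟩ := Filter.nonempty_of_mem (f := (U : Filter (Finset G))) h1
    exact hCone F hF
  have hPtot : ∀ g : G, g ≠ 1 → g ∈ P ∨ g⁻¹ ∈ P := by
    intro g hg
    by_cases hgP : g ∈ P
    · exact Or.inl hgP
    right
    have hc : {F : Finset G | g ∈ Subsemigroup.closure (C F)}ᶜ ∈ U :=
      Ultrafilter.compl_mem_iff_notMem.mpr hgP
    have hA : {F : Finset G | g ∈ F} ∈ U := by
      apply hUle
      exact Filter.mem_of_superset (Filter.mem_atTop {g}) (fun F hF => hF (by simp))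
    refine Filter.mem_of_superset (Filter.inter_mem hc hA) ?_
    rintro F ⟨hFc, hFg⟩
    have : g ∈ F.erase 1 := Finset.mem_erase.mpr ⟨hg, hFg⟩
    rcases hCtot F g this with hgc | hgc
    · exact absurd (Subsemigroup.subset_closure hgc) hFc
    · exact Subsemigroup.subset_closure hgc
  have hPasym : ∀ g : G, g ∈ P → g⁻¹ ∈ P → False := by
    intro g hgp hgip
    obtain ⟨F, h1, h2⟩ := Filter.nonempty_of_mem (f := (U : Filter (Finset G)))
      (Filter.inter_mem hgp hgip)
    simp only [Set.mem_setOf_eq] at h1 h2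
    have : (1:G) ∈ Subsemigroup.closure (C F) := by
      have := mul_mem h1 h2
      simpa using this
    exact hCone F this
  haveI ht : IsTrichotomous G (fun a b => a⁻¹ * b ∈ P) := by
    constructor
    intro a b
    refine fun h1 h2 => (?_ : a⁻¹ * b ∈ P ∨ a = b ∨ b⁻¹ * a ∈ P).elim (fun h => absurd h h1) (fun h => h.elim id (fun h => absurd h h2))
    by_cases hab : a = b
    · exact Or.inr (Or.inl hab)
    · have hne : a⁻¹ * b ≠ 1 := by
        intro he
        exact hab (by rw [← mul_one a, ← he]; group)
      rcases hPtot _ hne with hp | hp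
      · exact Or.inl hp
      · refine Or.inr (Or.inr ?_)
        simpa [mul_inv_rev] using hp
  haveI hi : IsIrrefl G (fun a b => a⁻¹ * b ∈ P) := by
    constructor
    intro a ha
    simp only [inv_mul_cancel] at ha
    exact hPone ha
  haveI htr : IsTrans G (fun a b => a⁻¹ * b ∈ P) := by
    constructor
    intro a b c hab hbc
    have := hPmul _ _ hab hbc
    simpa [mul_assoc] using this
  haveI hso : IsStrictOrder G (fun a b => a⁻¹ * b ∈ P) := ⟨⟩
  refine ⟨fun a b => a⁻¹ * b ∈ P, ⟨⟩, ?_⟩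
  intro a b c
  have : (c * a)⁻¹ * (c * b) = a⁻¹ * b := by group
  simp only [this]
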